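/- arXiv:1804.09815 — 4 statements merged into one kernel-verified Lean document; each statement's English description precedes it below -/
import Mathlib

section
/- For every μ ∈ ℝ there exists a constant C(μ) > 0, depending only on μ, such that for all (t,x,y) ∈ (0,1] × ℝ_{≥0} × ℝ_{≥0} one has ρ_μ(t,x,y) ≤ C(μ)·ϱ(t,x,y). -/
open MeasureTheory Real

/-- Complementary error function: `erfc x = (2/√π) ∫_x^∞ e^{-s²} ds`. -/
noncomputable def erfc (x : ℝ) : ℝ :=
  (2 / Real.sqrt π) * ∫ s in Set.Ioi x, Real.exp (-s ^ 2)

/-- Standard heat kernel `ϱ(t,x,y) = (1/√(2πt)) exp(-(y-x)²/(2t))`. -/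
noncomputable def heatKernel (t x y : ℝ) : ℝ :=
  (1 / Real.sqrt (2 * π * t)) * Real.exp (-(y - x) ^ 2 / (2 * t))

/-- Robin heat kernel `ρ_μ(t,x,y)`. -/
noncomputable def robinKernel (μ t x y : ℝ) : ℝ :=
  (1 / Real.sqrt (2 * π * t)) *
      (Real.exp (-(y - x) ^ 2 / (2 * t)) + Real.exp (-(y + x) ^ 2 / (2 * t))) -
    μ * Real.exp (μ * (y + x) + μ ^ 2 * t / 2) *
      erfc ((y + x) / Real.sqrt (2 * t) + μ * Real.sqrt (t / 2))

lemma integrable_exp_neg_sq : MeasureTheory.Integrable fun s : ℝ => Real.exp (-s ^ 2) := by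
  simpa using integrable_exp_neg_mul_sq (one_pos)

lemma erfc_nonneg (x : ℝ) : 0 ≤ erfc x := by
  apply mul_nonneg
  · positivity
  · exact setIntegral_nonneg measurableSet_Ioi fun s _ => (Real.exp_pos _).le

lemma integral_Ioi_exp_neg_sq_le (x : ℝ) :
    ∫ s in Set.Ioi x, Real.exp (-s ^ 2) ≤ Real.sqrt π := by
  calc ∫ s in Set.Ioi x, Real.exp (-s ^ 2) ≤ ∫ s : ℝ, Real.exp (-s ^ 2) :=
        setIntegral_le_integral integrable_exp_neg_sq
          (Filter.Eventually.of_forall fun s => (Real.exp_pos _).le)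
    _ = Real.sqrt π := by simpa using integral_gaussian 1

lemma erfc_le_two (x : ℝ) : erfc x ≤ 2 := by
  have hπ : 0 < Real.sqrt π := Real.sqrt_pos.mpr Real.pi_pos
  have := integral_Ioi_exp_neg_sq_le x
  calc erfc x ≤ (2 / Real.sqrt π) * Real.sqrt π := by
        apply mul_le_mul_of_nonneg_left this (by positivity)
    _ = 2 := by field_simp

lemma integral_shift (u : ℝ) :
    ∫ s in Set.Ioi u, Real.exp (-(s - u) ^ 2) = ∫ s in Set.Ioi (0:ℝ), Real.exp (-s ^ 2) := by
  have hmp : MeasurePreserving (· - u) (volume : Measure ℝ) volume :=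
    measurePreserving_sub_right volume u
  have hemb : MeasurableEmbedding (· - u : ℝ → ℝ) :=
    (MeasurableEquiv.subRight u).measurableEmbedding
  have := hmp.setIntegral_preimage_emb hemb (fun s => Real.exp (-s ^ 2)) (Set.Ioi 0)
  rw [Set.preimage_sub_const_Ioi] at this
  simpa using this

lemma erfc_le_exp_neg_sq {u : ℝ} (hu : 0 ≤ u) : erfc u ≤ Real.exp (-u ^ 2) := by
  have hπ : 0 < Real.sqrt π := Real.sqrt_pos.mpr Real.pi_pos
  have key : ∫ s in Set.Ioi u, Real.exp (-s ^ 2)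
      ≤ Real.exp (-u ^ 2) * (Real.sqrt π / 2) := by
    have h1 : ∫ s in Set.Ioi u, Real.exp (-s ^ 2)
        ≤ ∫ s in Set.Ioi u, Real.exp (-u ^ 2) * Real.exp (-(s - u) ^ 2) := by
      apply setIntegral_mono_on
      · exact integrable_exp_neg_sq.integrableOn
      · apply Integrable.integrableOn
        apply Integrable.const_mul
        have : MeasureTheory.Integrable fun s : ℝ => Real.exp (-(s - u) ^ 2) := by
          simpa using integrable_exp_neg_sq.comp_sub_right u
        exact this
      · exact measurableSet_Ioi
      · intro s hs
        rw [← Real.exp_add]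
        apply Real.exp_le_exp.mpr
        have hsu : u ≤ s := le_of_lt hs
        nlinarith
    have h2 : ∫ s in Set.Ioi u, Real.exp (-u ^ 2) * Real.exp (-(s - u) ^ 2)
        = Real.exp (-u ^ 2) * ∫ s in Set.Ioi u, Real.exp (-(s - u) ^ 2) := by
      rw [integral_const_mul]
    have h3 : ∫ s in Set.Ioi u, Real.exp (-(s - u) ^ 2) = Real.sqrt π / 2 := by
      rw [integral_shift]
      simpa using integral_gaussian_Ioi 1
    rw [h2, h3] at h1
    exact h1
  calc erfc u ≤ (2 / Real.sqrt π) * (Real.exp (-u ^ 2) * (Real.sqrt π / 2)) := by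
        apply mul_le_mul_of_nonneg_left key (by positivity)
    _ = Real.exp (-u ^ 2) := by field_simp

lemma main_est (μ t z : ℝ) (ht0 : 0 < t) (ht1 : t ≤ 1) (hz0 : 0 ≤ z) :
    Real.exp (μ * z + μ ^ 2 * t / 2) * erfc (z / Real.sqrt (2 * t) + μ * Real.sqrt (t / 2))
      ≤ 2 * Real.exp (μ ^ 2) * Real.exp (-z ^ 2 / (2 * t)) := by
  have h2t : (0:ℝ) < 2 * t := by linarith
  have hs2t : 0 < Real.sqrt (2 * t) := Real.sqrt_pos.mpr h2t
  have hsq2t : Real.sqrt (2 * t) ^ 2 = 2 * t := Real.sq_sqrt h2t.le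
  have hst2 : Real.sqrt (t / 2) = Real.sqrt (2 * t) / 2 := by
    rw [show t / 2 = (2 * t) / 4 by ring, show (4:ℝ) = 2 ^ 2 by norm_num]
    rw [Real.sqrt_div h2t.le, Real.sqrt_sq (by norm_num : (0:ℝ) ≤ 2)]
  obtain ⟨a, ha⟩ : ∃ a, z / Real.sqrt (2 * t) = a := ⟨_, rfl⟩
  obtain ⟨w, hw⟩ : ∃ w, a + μ * Real.sqrt (t / 2) = w := ⟨_, rfl⟩
  rw [ha, hw]
  have ha0 : 0 ≤ a := ha ▸ div_nonneg hz0 hs2t.le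
  have haz : a * Real.sqrt (2 * t) = z := by rw [← ha]; field_simp
  have haw : μ * z + μ ^ 2 * t / 2 = w ^ 2 - a ^ 2 := by
    rw [← hw, hst2]
    linear_combination (-μ) * haz + (-(μ ^ 2) / 4) * hsq2t
  have ha2 : a ^ 2 = z ^ 2 / (2 * t) := by
    rw [← ha, div_pow, hsq2t]
  have hwlb : -|μ| ≤ w := by
    have h1 : Real.sqrt (t / 2) ≤ 1 := by
      rw [show (1:ℝ) = Real.sqrt 1 by simp]
      exact Real.sqrt_le_sqrt (by linarith)
    have h2 : -|μ| ≤ μ * Real.sqrt (t / 2) := by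
      rcases le_or_gt 0 μ with hμ | hμ
      · have : 0 ≤ μ * Real.sqrt (t / 2) := mul_nonneg hμ (Real.sqrt_nonneg _)
        linarith [abs_nonneg μ]
      · rw [abs_of_neg hμ]
        nlinarith [Real.sqrt_nonneg (t / 2)]
    linarith
  have herfc : erfc w ≤ 2 * Real.exp (μ ^ 2) * Real.exp (-w ^ 2) := by
    rcases le_or_gt 0 w with hw0 | hw0
    · calc erfc w ≤ Real.exp (-w ^ 2) := erfc_le_exp_neg_sq hw0
        _ ≤ 2 * Real.exp (μ ^ 2) * Real.exp (-w ^ 2) := by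
            nlinarith [Real.exp_pos (-w ^ 2), Real.one_le_exp (sq_nonneg μ)]
    · have hw2 : w ^ 2 ≤ μ ^ 2 := by
        nlinarith [sq_abs μ, abs_nonneg μ]
      calc erfc w ≤ 2 := erfc_le_two w
        _ = 2 * Real.exp (w ^ 2) * Real.exp (-w ^ 2) := by
            rw [mul_assoc, ← Real.exp_add]; simp
        _ ≤ 2 * Real.exp (μ ^ 2) * Real.exp (-w ^ 2) := by
            have := Real.exp_le_exp.mpr hw2
            nlinarith [Real.exp_pos (-w ^ 2)]
  calc Real.exp (μ * z + μ ^ 2 * t / 2) * erfc w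
      ≤ Real.exp (μ * z + μ ^ 2 * t / 2) * (2 * Real.exp (μ ^ 2) * Real.exp (-w ^ 2)) :=
        mul_le_mul_of_nonneg_left herfc (Real.exp_pos _).le
    _ = 2 * Real.exp (μ ^ 2) * (Real.exp (μ * z + μ ^ 2 * t / 2) * Real.exp (-w ^ 2)) := by
        ring
    _ = 2 * Real.exp (μ ^ 2) * Real.exp (μ * z + μ ^ 2 * t / 2 + -w ^ 2) := by
        rw [← Real.exp_add]
    _ = 2 * Real.exp (μ ^ 2) * Real.exp (-z ^ 2 / (2 * t)) := by
        congr 1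
        rw [haw, neg_div, ← ha2]; ring_nf

/-- For every `μ ∈ ℝ` there is a constant `C(μ) > 0`, depending only on `μ`, such that
for all `(t,x,y) ∈ (0,1] × ℝ_{≥0} × ℝ_{≥0}` one has `ρ_μ(t,x,y) ≤ C(μ) ϱ(t,x,y)`. -/
theorem robinKernel_le_const_mul_heatKernel (μ : ℝ) :
    ∃ C : ℝ, 0 < C ∧ ∀ t x y : ℝ, t ∈ Set.Ioc (0 : ℝ) 1 → 0 ≤ x → 0 ≤ y →
      robinKernel μ t x y ≤ C * heatKernel t x y := by
  refine ⟨2 + 2 * |μ| * Real.exp (μ ^ 2) * Real.sqrt (2 * π), by positivity, ?_⟩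
  intro t x y ht hx hy
  obtain ⟨ht0, ht1⟩ := ht
  have h2t : (0:ℝ) < 2 * t := by linarith
  have hs2πt : 0 < Real.sqrt (2 * π * t) := Real.sqrt_pos.mpr (by positivity)
  have hz0 : (0:ℝ) ≤ y + x := by positivity
  have hE := main_est μ t (y + x) ht0 ht1 hz0
  have hEn : 0 ≤ Real.exp (μ * (y + x) + μ ^ 2 * t / 2) *
      erfc ((y + x) / Real.sqrt (2 * t) + μ * Real.sqrt (t / 2)) :=
    mul_nonneg (Real.exp_pos _).le (erfc_nonneg _)
  have hze : Real.exp (-(y + x) ^ 2 / (2 * t)) ≤ Real.exp (-(y - x) ^ 2 / (2 * t)) := by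
    apply Real.exp_le_exp.mpr
    exact (div_le_div_iff_of_pos_right h2t).mpr (by nlinarith)
  have hepos := Real.exp_pos (-(y - x) ^ 2 / (2 * t))
  have hK2 : Real.exp (-(y - x) ^ 2 / (2 * t)) ≤ Real.sqrt (2 * π) * heatKernel t x y := by
    unfold heatKernel
    have h1 : Real.sqrt (2 * π * t) ≤ Real.sqrt (2 * π) := by
      apply Real.sqrt_le_sqrt
      nlinarith [Real.pi_pos]
    have h2 : (1:ℝ) ≤ Real.sqrt (2 * π) * (1 / Real.sqrt (2 * π * t)) := by
      rw [mul_one_div, le_div_iff₀ hs2πt, one_mul]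
      exact h1
    nlinarith
  -- second term bound
  have hB : -(μ * Real.exp (μ * (y + x) + μ ^ 2 * t / 2) *
      erfc ((y + x) / Real.sqrt (2 * t) + μ * Real.sqrt (t / 2)))
      ≤ 2 * |μ| * Real.exp (μ ^ 2) * Real.sqrt (2 * π) * heatKernel t x y := by
    have step1 : -(μ * Real.exp (μ * (y + x) + μ ^ 2 * t / 2) *
        erfc ((y + x) / Real.sqrt (2 * t) + μ * Real.sqrt (t / 2)))
        = (-μ) * (Real.exp (μ * (y + x) + μ ^ 2 * t / 2) *
          erfc ((y + x) / Real.sqrt (2 * t) + μ * Real.sqrt (t / 2))) := by ring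
    rw [step1]
    calc (-μ) * (Real.exp (μ * (y + x) + μ ^ 2 * t / 2) *
          erfc ((y + x) / Real.sqrt (2 * t) + μ * Real.sqrt (t / 2)))
        ≤ |μ| * (Real.exp (μ * (y + x) + μ ^ 2 * t / 2) *
          erfc ((y + x) / Real.sqrt (2 * t) + μ * Real.sqrt (t / 2))) :=
          mul_le_mul_of_nonneg_right (neg_le_abs μ) hEn
      _ ≤ |μ| * (2 * Real.exp (μ ^ 2) * Real.exp (-(y + x) ^ 2 / (2 * t))) :=
          mul_le_mul_of_nonneg_left hE (abs_nonneg μ)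
      _ ≤ |μ| * (2 * Real.exp (μ ^ 2) * Real.exp (-(y - x) ^ 2 / (2 * t))) := by
          apply mul_le_mul_of_nonneg_left _ (abs_nonneg μ)
          exact mul_le_mul_of_nonneg_left hze (by positivity)
      _ ≤ |μ| * (2 * Real.exp (μ ^ 2) * (Real.sqrt (2 * π) * heatKernel t x y)) := by
          apply mul_le_mul_of_nonneg_left _ (abs_nonneg μ)
          exact mul_le_mul_of_nonneg_left hK2 (by positivity)
      _ = 2 * |μ| * Real.exp (μ ^ 2) * Real.sqrt (2 * π) * heatKernel t x y := by ring
  -- first term bound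
  have hterm1 : (1 / Real.sqrt (2 * π * t)) *
      (Real.exp (-(y - x) ^ 2 / (2 * t)) + Real.exp (-(y + x) ^ 2 / (2 * t)))
      ≤ 2 * heatKernel t x y := by
    unfold heatKernel
    have hinv : 0 < 1 / Real.sqrt (2 * π * t) := by positivity
    nlinarith
  unfold robinKernel
  calc (1 / Real.sqrt (2 * π * t)) *
      (Real.exp (-(y - x) ^ 2 / (2 * t)) + Real.exp (-(y + x) ^ 2 / (2 * t))) -
      μ * Real.exp (μ * (y + x) + μ ^ 2 * t / 2) *
        erfc ((y + x) / Real.sqrt (2 * t) + μ * Real.sqrt (t / 2))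
      ≤ 2 * heatKernel t x y +
        2 * |μ| * Real.exp (μ ^ 2) * Real.sqrt (2 * π) * heatKernel t x y := by
        rw [sub_eq_add_neg]
        exact add_le_add hterm1 hB
    _ = (2 + 2 * |μ| * Real.exp (μ ^ 2) * Real.sqrt (2 * π)) * heatKernel t x y := by ring
end

section
/- For all t > 0, a ≥ 0 and μ ∈ ℝ one has the identity (1/√(2πt³)) · ∫_0^∞ e^{−μs} (a+s) e^{−(a+s)²/(2t)} ds = (1/√(2πt)) · e^{−a²/(2t)} − (μ/2) · e^{μa + μ²t/2} · erfc(a/√(2t) + μ·√(t/2)). -/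
open MeasureTheory Real Set Filter

/-- For all `t > 0`, `a ≥ 0`, `μ ∈ ℝ`:
`(1/√(2πt³)) ∫_0^∞ e^{-μs}(a+s) e^{-(a+s)²/(2t)} ds
  = (1/√(2πt)) e^{-a²/(2t)} - (μ/2) e^{μa + μ²t/2} erfc(a/√(2t) + μ√(t/2))`. -/
theorem integral_exp_shifted_gaussian (t a μ : ℝ) (ht : 0 < t) (ha : 0 ≤ a) :
    (1 / Real.sqrt (2 * π * t ^ 3)) *
        ∫ s in Set.Ioi (0 : ℝ),
          Real.exp (-μ * s) * (a + s) * Real.exp (-(a + s) ^ 2 / (2 * t)) =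
      (1 / Real.sqrt (2 * π * t)) * Real.exp (-a ^ 2 / (2 * t)) -
        (μ / 2) * Real.exp (μ * a + μ ^ 2 * t / 2) *
          erfc (a / Real.sqrt (2 * t) + μ * Real.sqrt (t / 2)) := by
  have ht0 : t ≠ 0 := ht.ne'
  have h2t : (0:ℝ) < 2 * t := by linarith
  set c : ℝ := a + μ * t with hc
  set K : ℝ := Real.exp (μ * a + μ ^ 2 * t / 2) with hK
  -- the exponent identity
  have hexp : ∀ s : ℝ, Real.exp (-μ * s) * Real.exp (-(a + s) ^ 2 / (2 * t))
      = K * Real.exp (-(s + c) ^ 2 / (2 * t)) := by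
    intro s
    rw [hK, ← Real.exp_add, ← Real.exp_add]
    congr 1
    rw [hc]
    field_simp
    ring
  -- derivative of the antiderivative
  have hderiv : ∀ s : ℝ, HasDerivAt (fun s : ℝ => -t * K * Real.exp (-(s + c) ^ 2 / (2 * t)))
      (K * (s + c) * Real.exp (-(s + c) ^ 2 / (2 * t))) s := by
    intro s
    have h1 : HasDerivAt (fun s : ℝ => -(s + c) ^ 2 / (2 * t))
        (-(2 * (s + c) ^ 1 * 1) / (2 * t)) s :=
      (((hasDerivAt_id s).add_const c).pow 2).neg.div_const (2 * t)
    have h2 := (h1.exp).const_mul (-t * K)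
    refine h2.congr_deriv ?_
    linear_combination (K * (s + c) * Real.exp (-(s + c) ^ 2 / (2 * t))) * mul_inv_cancel₀ ht0
  -- integrability of the derivative
  have hint1 : Integrable (fun s : ℝ => K * (s + c) * Real.exp (-(s + c) ^ 2 / (2 * t))) := by
    have h0 : Integrable (fun x : ℝ => x * Real.exp (-(1 / (2 * t)) * x ^ 2)) :=
      integrable_mul_exp_neg_mul_sq (by positivity)
    have h1 : Integrable (fun x : ℝ => (x + c) * Real.exp (-(1 / (2 * t)) * (x + c) ^ 2)) :=
      h0.comp_add_right c
    have heq : (fun s : ℝ => K * (s + c) * Real.exp (-(s + c) ^ 2 / (2 * t)))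
        = fun s : ℝ => K * ((s + c) * Real.exp (-(1 / (2 * t)) * (s + c) ^ 2)) := by
      funext s
      rw [show -(s + c) ^ 2 / (2 * t) = -(1 / (2 * t)) * (s + c) ^ 2 by field_simp]
      ring
    rw [heq]
    exact h1.const_mul K
  -- integrability of the gaussian part
  have hint2 : Integrable (fun s : ℝ => Real.exp (-(s + c) ^ 2 / (2 * t))) := by
    have h0 : Integrable (fun x : ℝ => Real.exp (-(1 / (2 * t)) * x ^ 2)) :=
      integrable_exp_neg_mul_sq (by positivity)
    have h1 : Integrable (fun x : ℝ => Real.exp (-(1 / (2 * t)) * (x + c) ^ 2)) :=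
      h0.comp_add_right c
    refine h1.congr ?_
    filter_upwards with s
    rw [show -(1 / (2 * t)) * (s + c) ^ 2 = -(s + c) ^ 2 / (2 * t) by field_simp]
  -- limit at infinity
  have htend : Tendsto (fun s : ℝ => -t * K * Real.exp (-(s + c) ^ 2 / (2 * t)))
      atTop (nhds 0) := by
    have h1 : Tendsto (fun s : ℝ => -(s + c) ^ 2 / (2 * t)) atTop atBot := by
      apply Tendsto.atBot_div_const h2t
      apply tendsto_neg_atBot_iff.mpr
      exact (tendsto_pow_atTop (by norm_num)).comp (tendsto_atTop_add_const_right atTop c tendsto_id)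
    have h2 := Real.tendsto_exp_atBot.comp h1
    have h3 := h2.const_mul (-t * K)
    simpa using h3
  -- FTC
  have hFTC : ∫ s in Ioi (0:ℝ), K * (s + c) * Real.exp (-(s + c) ^ 2 / (2 * t))
      = t * Real.exp (-a ^ 2 / (2 * t)) := by
    rw [integral_Ioi_of_hasDerivAt_of_tendsto' (fun x _ => hderiv x) hint1.integrableOn htend]
    have h0 := hexp 0
    simp only [mul_zero, neg_zero, Real.exp_zero, one_mul, zero_add, add_zero] at h0
    rw [zero_add] at *
    nlinarith [h0]
  -- rewrite the integrand
  have hre : ∫ s in Ioi (0:ℝ), Real.exp (-μ * s) * (a + s) * Real.exp (-(a + s) ^ 2 / (2 * t))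
      = t * Real.exp (-a ^ 2 / (2 * t))
        - μ * t * K * ∫ s in Ioi (0:ℝ), Real.exp (-(s + c) ^ 2 / (2 * t)) := by
    have heq : ∀ s : ℝ, Real.exp (-μ * s) * (a + s) * Real.exp (-(a + s) ^ 2 / (2 * t))
        = K * (s + c) * Real.exp (-(s + c) ^ 2 / (2 * t))
          - μ * t * (K * Real.exp (-(s + c) ^ 2 / (2 * t))) := by
      intro s
      have h := hexp s
      have hac : (a + s : ℝ) = (s + c) - μ * t := by rw [hc]; ring
      calc Real.exp (-μ * s) * (a + s) * Real.exp (-(a + s) ^ 2 / (2 * t))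
          = (a + s) * (Real.exp (-μ * s) * Real.exp (-(a + s) ^ 2 / (2 * t))) := by ring
        _ = (a + s) * (K * Real.exp (-(s + c) ^ 2 / (2 * t))) := by rw [h]
        _ = _ := by rw [hac]; ring
    rw [setIntegral_congr_fun measurableSet_Ioi (fun s _ => heq s),
      integral_sub hint1.integrableOn
        (((hint2.const_mul K).const_mul (μ * t)).integrableOn), hFTC,
      integral_const_mul, integral_const_mul]
    ring
  -- shift the gaussian integral
  have hshift : ∫ s in Ioi (0:ℝ), Real.exp (-(s + c) ^ 2 / (2 * t))
      = ∫ x in Ioi c, Real.exp (-x ^ 2 / (2 * t)) := by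
    have := (measurePreserving_add_right volume c).setIntegral_preimage_emb
      (MeasurableEquiv.addRight c).measurableEmbedding
      (fun x => Real.exp (-x ^ 2 / (2 * t))) (Ioi c)
    rw [← this]
    simp [preimage_add_const_Ioi]
  -- scale the gaussian integral
  set r : ℝ := Real.sqrt (2 * t) with hr
  have hrpos : 0 < r := Real.sqrt_pos.mpr h2t
  have hr2 : r ^ 2 = 2 * t := Real.sq_sqrt h2t.le
  have hscale : ∫ x in Ioi c, Real.exp (-x ^ 2 / (2 * t))
      = r * ∫ u in Ioi (c / r), Real.exp (-u ^ 2) := by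
    have h1 : ∀ x : ℝ, Real.exp (-x ^ 2 / (2 * t)) = Real.exp (-(x * r⁻¹) ^ 2) := by
      intro x
      congr 1
      rw [mul_pow, inv_pow, hr2]
      field_simp
    rw [setIntegral_congr_fun measurableSet_Ioi (fun x _ => h1 x),
      integral_comp_mul_right_Ioi (fun u => Real.exp (-u ^ 2)) c (inv_pos.mpr hrpos)]
    rw [smul_eq_mul, inv_inv, mul_comm c r⁻¹, inv_mul_eq_div]
  -- identify erfc argument
  have harg : c / r = a / Real.sqrt (2 * t) + μ * Real.sqrt (t / 2) := by
    have hst : Real.sqrt (t / 2) * r = t := by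
      rw [hr, ← Real.sqrt_mul (by positivity), show t / 2 * (2 * t) = t ^ 2 by ring,
        Real.sqrt_sq ht.le]
    have htr : t / r = Real.sqrt (t / 2) := by
      rw [div_eq_iff hrpos.ne']; exact hst.symm
    rw [hc, ← hr, add_div, mul_div_assoc, htr]
  -- erfc value
  have herfc : ∫ u in Ioi (c / r), Real.exp (-u ^ 2)
      = Real.sqrt π / 2 * erfc (a / Real.sqrt (2 * t) + μ * Real.sqrt (t / 2)) := by
    rw [← harg, erfc]
    have hπ : Real.sqrt π ≠ 0 := by positivity
    field_simp
  -- sqrt identities for the final assembly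
  have hS : Real.sqrt (2 * π * t ^ 3) = Real.sqrt (2 * π * t) * t := by
    rw [show 2 * π * t ^ 3 = (2 * π * t) * t ^ 2 by ring,
      Real.sqrt_mul (by positivity), Real.sqrt_sq ht.le]
  have hrS : r * Real.sqrt π = Real.sqrt (2 * π * t) := by
    rw [hr, ← Real.sqrt_mul h2t.le, show 2 * t * π = 2 * π * t by ring]
  have hSpos : (0:ℝ) < Real.sqrt (2 * π * t) := Real.sqrt_pos.mpr (by positivity)
  rw [hre, hshift, hscale, herfc, hS]
  rw [show μ * t * K * (r * (Real.sqrt π / 2 *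
      erfc (a / Real.sqrt (2 * t) + μ * Real.sqrt (t / 2))))
    = μ * t * K * (Real.sqrt (2 * π * t) / 2 *
      erfc (a / Real.sqrt (2 * t) + μ * Real.sqrt (t / 2))) by rw [← hrS]; ring]
  set S : ℝ := Real.sqrt (2 * π * t) with hSdef
  set W : ℝ := erfc (a / Real.sqrt (2 * t) + μ * Real.sqrt (t / 2)) with hW
  set E : ℝ := Real.exp (-a ^ 2 / (2 * t)) with hE
  field_simp
end

section
/- For all μ ∈ ℝ, t > 0 and x, y ≥ 0 the Robin heat kernel has the integral representation ρ_μ(t,x,y) = (1/√(2πt))·(exp(−(y−x)²/(2t)) − exp(−(y+x)²/(2t))) + (2/√(2πt³)) · ∫_0^∞ e^{−μs} (y+x+s) e^{−(y+x+s)²/(2t)} ds. -/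
open MeasureTheory Real

open Set Filter

/-- Translation invariance of the Lebesgue integral on a half-line. -/
lemma integral_Ioi_comp_add_right (f : ℝ → ℝ) (a c : ℝ) :
    ∫ x in Set.Ioi a, f (x + c) = ∫ x in Set.Ioi (a + c), f x := by
  rw [← integral_indicator measurableSet_Ioi, ← integral_indicator measurableSet_Ioi,
    ← integral_add_right_eq_self ((Set.Ioi (a + c)).indicator f) c]
  congr 1
  ext x
  rw [Set.indicator_apply, Set.indicator_apply]
  simp [Set.mem_Ioi]

/-- The key computation: the integral `∫_0^∞ e^{-μs}(a+s)e^{-(a+s)²/(2t)} ds`. -/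
lemma key_integral (μ t a : ℝ) (ht : 0 < t) :
    ∫ s in Set.Ioi (0:ℝ), Real.exp (-μ * s) * (a + s) * Real.exp (-(a + s) ^ 2 / (2 * t))
    = t * Real.exp (-a ^ 2 / (2 * t))
      - μ * t * (Real.exp (μ * a + μ ^ 2 * t / 2) *
          (Real.sqrt (2 * t) * (Real.sqrt π / 2) * erfc ((a + μ * t) / Real.sqrt (2 * t)))) := by
  set c : ℝ := a + μ * t with hc
  set M : ℝ := Real.exp (μ * a + μ ^ 2 * t / 2) with hM
  have htne : t ≠ 0 := ht.ne'
  have hb : (0:ℝ) < 1 / (2 * t) := by positivity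
  -- pointwise identity
  have hpt : ∀ s : ℝ, Real.exp (-μ * s) * (a + s) * Real.exp (-(a + s) ^ 2 / (2 * t))
      = (s + c) * (M * Real.exp (-(1 / (2 * t)) * (s + c) ^ 2))
        - μ * t * (M * Real.exp (-(1 / (2 * t)) * (s + c) ^ 2)) := by
    intro s
    have hexp : Real.exp (-μ * s) * Real.exp (-(a + s) ^ 2 / (2 * t))
        = M * Real.exp (-(1 / (2 * t)) * (s + c) ^ 2) := by
      rw [hM, ← Real.exp_add, ← Real.exp_add]
      congr 1
      field_simp
      ring
    calc Real.exp (-μ * s) * (a + s) * Real.exp (-(a + s) ^ 2 / (2 * t))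
        = (a + s) * (Real.exp (-μ * s) * Real.exp (-(a + s) ^ 2 / (2 * t))) := by ring
      _ = (a + s) * (M * Real.exp (-(1 / (2 * t)) * (s + c) ^ 2)) := by rw [hexp]
      _ = _ := by rw [hc]; ring
  -- integrabilities
  have hG : Integrable (fun s : ℝ => M * Real.exp (-(1 / (2 * t)) * (s + c) ^ 2)) :=
    ((integrable_exp_neg_mul_sq hb).comp_add_right c).const_mul M
  have hF' : Integrable (fun s : ℝ => (s + c) * (M * Real.exp (-(1 / (2 * t)) * (s + c) ^ 2))) := by
    have := ((integrable_mul_exp_neg_mul_sq hb).comp_add_right c).const_mul M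
    exact this.congr (by filter_upwards with s; ring)
  -- FTC part
  have hFTC : ∫ s in Set.Ioi (0:ℝ), (s + c) * (M * Real.exp (-(1 / (2 * t)) * (s + c) ^ 2))
      = t * Real.exp (-a ^ 2 / (2 * t)) := by
    have hderiv : ∀ s ∈ Set.Ici (0:ℝ),
        HasDerivAt (fun s : ℝ => (-t) * (M * Real.exp (-(1 / (2 * t)) * (s + c) ^ 2)))
          ((s + c) * (M * Real.exp (-(1 / (2 * t)) * (s + c) ^ 2))) s := by
      intro s _
      have hu : HasDerivAt (fun s : ℝ => -(1 / (2 * t)) * (s + c) ^ 2)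
          (-(1 / (2 * t)) * (2 * (s + c) ^ 1 * 1)) s :=
        (((hasDerivAt_id s).add_const c).pow 2).const_mul (-(1 / (2 * t)))
      have := (hu.exp.const_mul M).const_mul (-t)
      convert this using 1
      iterate 2 rfl
      field_simp
    have htend : Tendsto (fun s : ℝ => (-t) * (M * Real.exp (-(1 / (2 * t)) * (s + c) ^ 2)))
        atTop (nhds 0) := by
      have h1 : Tendsto (fun s : ℝ => s + c) atTop atTop :=
        tendsto_atTop_add_const_right _ c tendsto_id
      have h2 : Tendsto (fun s : ℝ => -(1 / (2 * t)) * (s + c) ^ 2) atTop atBot := by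
        apply Tendsto.const_mul_atTop_of_neg (by simpa using neg_neg_iff_pos.mpr hb)
        exact (tendsto_pow_atTop (by norm_num)).comp h1
      have h3 : Tendsto (fun s : ℝ => Real.exp (-(1 / (2 * t)) * (s + c) ^ 2)) atTop (nhds 0) :=
        Real.tendsto_exp_atBot.comp h2
      have := ((h3.const_mul M).const_mul (-t))
      simpa using this
    rw [integral_Ioi_of_hasDerivAt_of_tendsto' hderiv hF'.integrableOn htend]
    have : M * Real.exp (-(1 / (2 * t)) * ((0:ℝ) + c) ^ 2) = Real.exp (-a ^ 2 / (2 * t)) := by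
      rw [hM, ← Real.exp_add]
      congr 1
      rw [hc]
      field_simp
      ring
    rw [this]
    ring
  -- Gaussian tail part
  have hK : ∫ s in Set.Ioi (0:ℝ), M * Real.exp (-(1 / (2 * t)) * (s + c) ^ 2)
      = M * (Real.sqrt (2 * t) * (Real.sqrt π / 2) * erfc (c / Real.sqrt (2 * t))) := by
    rw [integral_const_mul]
    congr 1
    have h2t : (0:ℝ) < 2 * t := by linarith
    have hs2t : (0:ℝ) < Real.sqrt (2 * t) := Real.sqrt_pos.mpr h2t
    have hbpos : (0:ℝ) < (Real.sqrt (2 * t))⁻¹ := inv_pos.mpr hs2t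
    have step1 : ∫ s in Set.Ioi (0:ℝ), Real.exp (-(1 / (2 * t)) * (s + c) ^ 2)
        = ∫ u in Set.Ioi c, Real.exp (-(1 / (2 * t)) * u ^ 2) := by
      rw [integral_Ioi_comp_add_right (fun u => Real.exp (-(1 / (2 * t)) * u ^ 2)) 0 c, zero_add]
    have step2 : ∀ u : ℝ, Real.exp (-(1 / (2 * t)) * u ^ 2)
        = Real.exp (-((Real.sqrt (2 * t))⁻¹ * u) ^ 2) := by
      intro u
      congr 1
      rw [mul_pow, inv_pow, Real.sq_sqrt h2t.le]
      ring
    rw [step1]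
    simp_rw [step2]
    rw [integral_comp_mul_left_Ioi (fun v => Real.exp (-v ^ 2)) c hbpos]
    rw [inv_inv, smul_eq_mul]
    rw [erfc]
    have hspi : (0:ℝ) < Real.sqrt π := Real.sqrt_pos.mpr Real.pi_pos
    rw [show (Real.sqrt (2*t))⁻¹ * c = c / Real.sqrt (2*t) by ring]
    field_simp
  calc ∫ s in Set.Ioi (0:ℝ), Real.exp (-μ * s) * (a + s) * Real.exp (-(a + s) ^ 2 / (2 * t))
      = ∫ s in Set.Ioi (0:ℝ), ((s + c) * (M * Real.exp (-(1 / (2 * t)) * (s + c) ^ 2))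
        - μ * t * (M * Real.exp (-(1 / (2 * t)) * (s + c) ^ 2))) := by
        apply setIntegral_congr_fun measurableSet_Ioi
        intro s _
        exact hpt s
    _ = (∫ s in Set.Ioi (0:ℝ), (s + c) * (M * Real.exp (-(1 / (2 * t)) * (s + c) ^ 2)))
        - ∫ s in Set.Ioi (0:ℝ), μ * t * (M * Real.exp (-(1 / (2 * t)) * (s + c) ^ 2)) := by
        exact integral_sub hF'.integrableOn ((hG.const_mul (μ * t)).integrableOn)
    _ = t * Real.exp (-a ^ 2 / (2 * t))
        - μ * t * (M * (Real.sqrt (2 * t) * (Real.sqrt π / 2) * erfc (c / Real.sqrt (2 * t)))) := by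
        rw [hFTC, integral_const_mul, hK]
    _ = _ := by rw [hc]

/-- Integral representation of the Robin heat kernel: for `μ ∈ ℝ`, `t > 0`, `x, y ≥ 0`,
`ρ_μ(t,x,y) = (1/√(2πt))(e^{-(y-x)²/(2t)} - e^{-(y+x)²/(2t)})
  + (2/√(2πt³)) ∫_0^∞ e^{-μs}(y+x+s) e^{-(y+x+s)²/(2t)} ds`. -/
theorem robinKernel_integral_repr (μ t x y : ℝ) (ht : 0 < t) (hx : 0 ≤ x) (hy : 0 ≤ y) :
    robinKernel μ t x y =
      (1 / Real.sqrt (2 * π * t)) *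
          (Real.exp (-(y - x) ^ 2 / (2 * t)) - Real.exp (-(y + x) ^ 2 / (2 * t))) +
        (2 / Real.sqrt (2 * π * t ^ 3)) *
          ∫ s in Set.Ioi (0 : ℝ),
            Real.exp (-μ * s) * (y + x + s) * Real.exp (-(y + x + s) ^ 2 / (2 * t)) := by
  have h2t : (0:ℝ) < 2 * t := by linarith
  have hs2t : (0:ℝ) < Real.sqrt (2 * t) := Real.sqrt_pos.mpr h2t
  have hspi : (0:ℝ) < Real.sqrt π := Real.sqrt_pos.mpr Real.pi_pos
  have harg : (y + x) / Real.sqrt (2 * t) + μ * Real.sqrt (t / 2)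
      = (y + x + μ * t) / Real.sqrt (2 * t) := by
    have h1 : Real.sqrt (t / 2) = t / Real.sqrt (2 * t) := by
      rw [eq_div_iff hs2t.ne', ← Real.sqrt_mul (by positivity : (0:ℝ) ≤ t / 2),
        show t / 2 * (2 * t) = t ^ 2 by ring, Real.sqrt_sq ht.le]
    rw [h1]
    field_simp
  have hcube : Real.sqrt (2 * π * t ^ 3) = Real.sqrt (2 * π * t) * t := by
    rw [show 2 * π * t ^ 3 = (2 * π * t) * t ^ 2 by ring,
      Real.sqrt_mul (by positivity), Real.sqrt_sq ht.le]
  have hsplit : Real.sqrt (2 * π * t) = Real.sqrt π * Real.sqrt (2 * t) := by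
    rw [show 2 * π * t = π * (2 * t) by ring, Real.sqrt_mul Real.pi_pos.le]
  rw [robinKernel, key_integral μ t (y + x) ht, harg, hcube, hsplit]
  field_simp
  ring
end

section
/- Let (S_i)_{i≥0} be a simple symmetric random walk on ℤ started at 0 and let N_n = #{1 ≤ i ≤ n : S_i = 0} be the number of returns to 0 up to time n. Then for all integers n, k ≥ 1 and every λ > 0, P(N_n ≥ k) ≤ e^{λn} · (1 − √(1 − e^{−2λ}))^k. -/
open MeasureTheory ProbabilityTheory Real

namespace ReturnsAux

/-- number of indices `i ∈ [1,m]` with `x + (g 0 + ... + g (i-1)) = 0`. -/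
def zer (x : ℤ) (g : ℕ → ℤ) (m : ℕ) : ℕ :=
  ((Finset.Icc 1 m).filter (fun i => x + ∑ j ∈ Finset.range i, g j = 0)).card

lemma zer_succ (x : ℤ) (g : ℕ → ℤ) (m : ℕ) :
    zer x g (m+1) = zer (x + g 0) (fun j => g (j+1)) m + (if x + g 0 = 0 then 1 else 0) := by
  classical
  unfold zer
  have h1 : Finset.Icc 1 (m+1) = insert 1 ((Finset.Icc 1 m).map (addRightEmbedding 1)) := by
    rw [Finset.map_add_right_Icc]
    ext i
    simp only [Finset.mem_Icc, Finset.mem_insert]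
    omega
  rw [h1, Finset.filter_insert]
  have h2 : ∀ i : ℕ, (x + ∑ j ∈ Finset.range (i+1), g j = 0) ↔
      (x + g 0 + ∑ j ∈ Finset.range i, g (j+1) = 0) := by
    intro i
    rw [Finset.sum_range_succ']
    constructor <;> intro h <;> omega
  have h3 : ((Finset.Icc 1 m).map (addRightEmbedding 1)).filter
        (fun i => x + ∑ j ∈ Finset.range i, g j = 0)
      = ((Finset.Icc 1 m).filter (fun i => x + g 0 + ∑ j ∈ Finset.range i, g (j+1) = 0)).map
          (addRightEmbedding 1) := by
    rw [Finset.filter_map]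
    congr 1
    apply Finset.filter_congr
    intro i _
    simpa [addRightEmbedding] using h2 i
  have hnotmem : (1:ℕ) ∉ ((Finset.Icc 1 m).map (addRightEmbedding 1)) := by
    simp only [Finset.mem_map, Finset.mem_Icc, addRightEmbedding_apply]
    rintro ⟨a, ha, hae⟩
    omega
  by_cases hx : x + g 0 = 0
  · rw [if_pos (by simpa using hx), if_pos hx, Finset.card_insert_of_notMem]
    · rw [h3, Finset.card_map]
    · intro hmem
      exact hnotmem (Finset.mem_of_mem_filter _ hmem)
  · rw [if_neg (by simpa using hx), if_neg hx, h3, Finset.card_map]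
    simp

noncomputable def gf (f ρ : ℝ) (x : ℤ) : ℝ := if x = 0 then f else ρ ^ x.natAbs

noncomputable def bf (f ρ : ℝ) (x : ℤ) (j : ℕ) : ℝ := if j = 0 then 1 else f ^ (j-1) * gf f ρ x

def steps (m : ℕ) (ε : Fin m → Bool) (j : ℕ) : ℤ :=
  if h : j < m then (if ε ⟨j, h⟩ then 1 else -1) else 0

lemma steps_cons_zero (m : ℕ) (a : Bool) (ε : Fin m → Bool) :
    steps (m+1) (Fin.cons a ε) 0 = (if a then 1 else -1) := by
  simp [steps]

lemma steps_cons_succ (m : ℕ) (a : Bool) (ε : Fin m → Bool) (j : ℕ) :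
    steps (m+1) (Fin.cons a ε) (j+1) = steps m ε j := by
  unfold steps
  by_cases h : j < m
  · rw [dif_pos (by omega : j+1 < m+1), dif_pos h]
    congr 1
  · rw [dif_neg (by omega), dif_neg h]

lemma gf_nonneg {f ρ : ℝ} (hf : 0 < f) (hρ : 0 < ρ) (x : ℤ) : 0 ≤ gf f ρ x := by
  unfold gf; split <;> positivity

lemma bf_nonneg {f ρ : ℝ} (hf : 0 < f) (hρ : 0 < ρ) (x : ℤ) (j : ℕ) : 0 ≤ bf f ρ x j := by
  unfold bf; split
  · norm_num
  · exact mul_nonneg (by positivity) (gf_nonneg hf hρ x)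

lemma gf_zero {f ρ : ℝ} : gf f ρ 0 = f := by simp [gf]

lemma gf_one {f ρ : ℝ} : gf f ρ 1 = ρ := by
  rw [gf, if_neg (by norm_num)]
  norm_num

lemma gf_neg_one {f ρ : ℝ} : gf f ρ (-1) = ρ := by
  rw [gf, if_neg (by norm_num)]
  norm_num

lemma gf_two {f ρ : ℝ} : gf f ρ 2 = ρ^2 := by
  rw [gf, if_neg (by norm_num)]
  norm_num

lemma gf_neg_two {f ρ : ℝ} : gf f ρ (-2) = ρ^2 := by
  rw [gf, if_neg (by norm_num)]
  norm_num

lemma bf_of_ne {f ρ : ℝ} (x : ℤ) (j : ℕ) (hj : j ≠ 0) : bf f ρ x j = f ^ (j-1) * gf f ρ x :=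
  if_neg hj

lemma bf_j0 {f ρ : ℝ} (x : ℤ) : bf f ρ x 0 = 1 := if_pos rfl

lemma bf_zero_j {f ρ : ℝ} (j : ℕ) (hj : j ≠ 0) : bf f ρ 0 (j - 1) = f ^ (j-1) := by
  unfold bf
  rcases eq_or_ne (j-1) 0 with h | h
  · rw [if_pos h, h, pow_zero]
  · rw [if_neg h, gf_zero]
    have : j - 1 - 1 + 1 = j - 1 := by omega
    rw [← pow_succ, this]

lemma bf_step {t f ρ : ℝ} (hf : 0 < f) (ht : 1 ≤ t) (hρ : ρ = f * t)
    (hid : ρ^2 + 1 = 2*(t*ρ)) (x : ℤ) (j : ℕ) :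
    bf f ρ (x+1) (j - (if x+1 = 0 then 1 else 0)) + bf f ρ (x-1) (j - (if x-1 = 0 then 1 else 0))
      ≤ 2 * t * bf f ρ x j := by
  have ht0 : (0:ℝ) < t := lt_of_lt_of_le one_pos ht
  have hρ0 : 0 < ρ := hρ ▸ mul_pos hf ht0
  rcases Nat.eq_zero_or_pos j with hj | hj
  · subst hj
    simp only [Nat.zero_sub]
    rw [bf_j0, bf_j0, bf_j0]
    linarith
  have hjne : j ≠ 0 := by omega
  have hfp : (0:ℝ) ≤ f ^ (j-1) := by positivity
  rcases eq_or_ne x 0 with rfl | hx0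
  · -- x = 0 : children at 1 and -1, no decrement
    rw [if_neg (by norm_num), if_neg (by norm_num), Nat.sub_zero,
      show (0:ℤ)+1 = 1 by norm_num, show (0:ℤ)-1 = -1 by norm_num,
      bf_of_ne _ _ hjne, bf_of_ne _ _ hjne, bf_of_ne _ _ hjne,
      gf_one, gf_neg_one, gf_zero]
    have : f ^ (j-1) * ρ + f ^ (j-1) * ρ = 2 * t * (f ^ (j-1) * f) := by
      rw [hρ]; ring
    linarith
  rcases eq_or_ne x (-1) with rfl | hxm1
  · -- x = -1 : children at 0 (decrement) and -2
    rw [if_pos (by norm_num), if_neg (by norm_num), Nat.sub_zero,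
      show (-1:ℤ)+1 = 0 by norm_num, show (-1:ℤ)-1 = -2 by norm_num,
      bf_zero_j j hjne, bf_of_ne _ _ hjne, bf_of_ne _ _ hjne,
      gf_neg_two, gf_neg_one]
    nlinarith [hid, hfp]
  rcases eq_or_ne x 1 with rfl | hx1
  · -- x = 1 : children at 2 and 0 (decrement)
    rw [if_neg (by norm_num), if_pos (by norm_num), Nat.sub_zero,
      show (1:ℤ)+1 = 2 by norm_num, show (1:ℤ)-1 = 0 by norm_num,
      bf_zero_j j hjne, bf_of_ne _ _ hjne, bf_of_ne _ _ hjne,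
      gf_two, gf_one]
    nlinarith [hid, hfp]
  · -- |x| ≥ 2
    have hxp1 : x + 1 ≠ 0 := by omega
    have hxm1' : x - 1 ≠ 0 := by omega
    rw [if_neg hxp1, if_neg hxm1', Nat.sub_zero,
      bf_of_ne _ _ hjne, bf_of_ne _ _ hjne, bf_of_ne _ _ hjne]
    rw [show gf f ρ (x+1) = ρ ^ (x+1).natAbs from by rw [gf, if_neg hxp1],
      show gf f ρ (x-1) = ρ ^ (x-1).natAbs from by rw [gf, if_neg hxm1'],
      show gf f ρ x = ρ ^ x.natAbs from by rw [gf, if_neg hx0]]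
    have hq : ∃ q : ℕ, x.natAbs = q + 2 ∧
        ((x+1).natAbs = q + 3 ∧ (x-1).natAbs = q + 1 ∨
         (x+1).natAbs = q + 1 ∧ (x-1).natAbs = q + 3) := by
      refine ⟨x.natAbs - 2, by omega, ?_⟩
      omega
    obtain ⟨q, hq1, hq2⟩ := hq
    have hkey : ρ ^ (q+3) + ρ ^ (q+1) = 2 * t * ρ ^ (q+2) := by
      have h3 : ρ ^ (q+3) = ρ ^ (q+1) * ρ^2 := by ring
      have h2' : ρ ^ (q+2) = ρ ^ (q+1) * ρ := by ring
      rw [h3, h2']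
      nlinarith [hid, pow_pos hρ0 (q+1)]
    rcases hq2 with ⟨ha, hb⟩ | ⟨ha, hb⟩ <;> rw [ha, hb, hq1] <;> nlinarith [hkey, hfp]

lemma main_bound {t f ρ : ℝ} (hf : 0 < f) (ht : 1 ≤ t) (hρ : ρ = f * t)
    (hid : ρ^2 + 1 = 2*(t*ρ)) :
    ∀ (m : ℕ) (x : ℤ) (j : ℕ),
      (∑ ε : Fin m → Bool, if j ≤ zer x (steps m ε) m then (1:ℝ) else 0)
        ≤ 2^m * t^m * bf f ρ x j := by
  have ht0 : (0:ℝ) < t := lt_of_lt_of_le one_pos ht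
  have hρ0 : 0 < ρ := hρ ▸ mul_pos hf ht0
  intro m
  induction m with
  | zero =>
    intro x j
    have hz : ∀ g : ℕ → ℤ, zer x g 0 = 0 := by
      intro g; unfold zer; simp
    rw [Fintype.sum_unique]
    rcases Nat.eq_zero_or_pos j with hj | hj
    · subst hj
      rw [if_pos (by omega)]
      simp [bf]
    · rw [if_neg (by rw [hz]; omega)]
      have h1 := bf_nonneg hf hρ0 x j
      positivity
  | succ m ih =>
    intro x j
    have hsplit : (∑ ε : Fin (m+1) → Bool, if j ≤ zer x (steps (m+1) ε) (m+1) then (1:ℝ) else 0)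
        = ∑ p : Bool × (Fin m → Bool),
            (if j ≤ zer x (steps (m+1) (Fin.cons p.1 p.2)) (m+1) then (1:ℝ) else 0) := by
      rw [← Equiv.sum_comp (Fin.consEquiv (fun _ : Fin (m+1) => Bool))
        (fun ε => if j ≤ zer x (steps (m+1) ε) (m+1) then (1:ℝ) else 0)]
      rfl
    rw [hsplit, Fintype.sum_prod_type, Fintype.sum_bool]
    have hsum : ∀ (a : Bool) (ε : Fin m → Bool),
        zer x (steps (m+1) (Fin.cons a ε)) (m+1)
          = zer (x + (if a then 1 else -1)) (steps m ε) m
            + (if x + (if a then 1 else -1) = 0 then 1 else 0) := by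
      intro a ε
      rw [zer_succ]
      have h0 : steps (m+1) (Fin.cons a ε) 0 = (if a then 1 else -1) := steps_cons_zero m a ε
      have hfun : (fun j => steps (m+1) (Fin.cons a ε) (j+1)) = steps m ε :=
        funext (steps_cons_succ m a ε)
      rw [h0, hfun]
    have hcond : ∀ (a : Bool) (ε : Fin m → Bool),
        (if j ≤ zer x (steps (m+1) (Fin.cons a ε)) (m+1) then (1:ℝ) else 0)
        = (if j - (if x + (if a then 1 else -1) = 0 then 1 else 0)
              ≤ zer (x + (if a then 1 else -1)) (steps m ε) m then (1:ℝ) else 0) := by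
      intro a ε
      rw [hsum a ε]
      congr 1
      rw [eq_iff_iff, Nat.sub_le_iff_le_add]
    calc (∑ ε : Fin m → Bool,
            if j ≤ zer x (steps (m+1) (Fin.cons true ε)) (m+1) then (1:ℝ) else 0)
          + (∑ ε : Fin m → Bool,
            if j ≤ zer x (steps (m+1) (Fin.cons false ε)) (m+1) then (1:ℝ) else 0)
        = (∑ ε : Fin m → Bool,
            if j - (if x + 1 = 0 then 1 else 0) ≤ zer (x+1) (steps m ε) m then (1:ℝ) else 0)
          + (∑ ε : Fin m → Bool,
            if j - (if x - 1 = 0 then 1 else 0) ≤ zer (x-1) (steps m ε) m then (1:ℝ) else 0) := by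
          rw [Finset.sum_congr rfl (fun ε _ => hcond true ε),
            Finset.sum_congr rfl (fun ε _ => hcond false ε)]
          norm_num [sub_eq_add_neg]
      _ ≤ 2^m * t^m * bf f ρ (x+1) (j - (if x + 1 = 0 then 1 else 0))
          + 2^m * t^m * bf f ρ (x-1) (j - (if x - 1 = 0 then 1 else 0)) := by
          exact add_le_add (ih (x+1) _) (ih (x-1) _)
      _ ≤ 2^(m+1) * t^(m+1) * bf f ρ x j := by
          have := bf_step hf ht hρ hid x j
          have h2 : (0:ℝ) ≤ 2^m * t^m := by positivity
          calc 2^m * t^m * bf f ρ (x+1) (j - (if x + 1 = 0 then 1 else 0))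
              + 2^m * t^m * bf f ρ (x-1) (j - (if x - 1 = 0 then 1 else 0))
              = 2^m * t^m * (bf f ρ (x+1) (j - (if x + 1 = 0 then 1 else 0))
                + bf f ρ (x-1) (j - (if x - 1 = 0 then 1 else 0))) := by ring
            _ ≤ 2^m * t^m * (2 * t * bf f ρ x j) := by
                exact mul_le_mul_of_nonneg_left this h2
            _ = 2^(m+1) * t^(m+1) * bf f ρ x j := by ring

end ReturnsAux

open ReturnsAux in
/-- Tail bound for the number of returns to `0` of a simple symmetric random walk:
for all `n, k ≥ 1` and `λ > 0`, `P(N_n ≥ k) ≤ e^{λn}(1 - √(1 - e^{-2λ}))^k`, where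
`N_n = #{1 ≤ i ≤ n : S_i = 0}`. -/
theorem returns_tail_bound {Ω : Type*} [MeasurableSpace Ω] (P : Measure Ω)
    [IsProbabilityMeasure P] (ξ : ℕ → Ω → ℤ) (hmeas : ∀ j, Measurable (ξ j))
    (hindep : iIndepFun ξ P)
    (hdist : ∀ j, P.map (ξ j) =
      (2 : ENNReal)⁻¹ • Measure.dirac (-1 : ℤ) + (2 : ENNReal)⁻¹ • Measure.dirac (1 : ℤ))
    (S : ℕ → Ω → ℤ) (hS : ∀ i ω, S i ω = ∑ j ∈ Finset.range i, ξ j ω)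
    (N : ℕ → Ω → ℕ)
    (hN : ∀ n ω, N n ω = ((Finset.Icc 1 n).filter (fun i => S i ω = 0)).card)
    (n k : ℕ) (hn : 1 ≤ n) (hk : 1 ≤ k) (lam : ℝ) (hlam : 0 < lam) :
    (P {ω | k ≤ N n ω}).toReal ≤
      Real.exp (lam * n) * (1 - Real.sqrt (1 - Real.exp (-2 * lam))) ^ k := by
  classical
  set t : ℝ := Real.exp lam with htdef
  set f : ℝ := 1 - Real.sqrt (1 - Real.exp (-2*lam)) with hfdef
  set ρ : ℝ := f * t with hρdef
  -- analytic facts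
  have hE1 : Real.exp (-2*lam) ≤ 1 := by
    rw [Real.exp_le_one_iff]; linarith
  have hE0 : 0 < Real.exp (-2*lam) := Real.exp_pos _
  have hqsq : Real.sqrt (1 - Real.exp (-2*lam)) ^ 2 = 1 - Real.exp (-2*lam) :=
    Real.sq_sqrt (by linarith)
  have hf : 0 < f := by
    have h1 : Real.sqrt (1 - Real.exp (-2*lam)) < 1 := by
      have : Real.sqrt (1 - Real.exp (-2*lam)) < Real.sqrt 1 :=
        Real.sqrt_lt_sqrt (by linarith) (by linarith)
      simpa using this
    simp only [hfdef]; linarith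
  have ht : 1 ≤ t := Real.one_le_exp hlam.le
  have hidf : f^2 + Real.exp (-2*lam) = 2*f := by
    have : f = 1 - Real.sqrt (1 - Real.exp (-2*lam)) := hfdef
    nlinarith [hqsq]
  have hts : t^2 * Real.exp (-2*lam) = 1 := by
    rw [htdef, ← Real.exp_nat_mul, ← Real.exp_add]
    norm_num
  have hid : ρ^2 + 1 = 2*(t*ρ) := by
    rw [hρdef]
    linear_combination t^2 * hidf - hts
  -- the events
  set Q : (Fin n → Bool) → Prop := fun ε => k ≤ zer 0 (steps n ε) n with hQdef
  set A : Set Ω := {ω | k ≤ N n ω} with hAdef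
  set C : (Fin n → Bool) → Set Ω :=
    fun ε => ⋂ i ∈ Finset.range n, ξ i ⁻¹' {steps n ε i} with hCdef
  set R : Set Ω := ⋃ i : Fin n, {ω | ξ i.1 ω ≠ 1 ∧ ξ i.1 ω ≠ -1} with hRdef
  -- on C ε the number of zeros is zer
  have hNC : ∀ (ε : Fin n → Bool) (ω : Ω), ω ∈ C ε → N n ω = zer 0 (steps n ε) n := by
    intro ε ω hω
    have hξ : ∀ i ∈ Finset.range n, ξ i ω = steps n ε i := by
      intro i hi
      exact Set.mem_iInter₂.mp hω i hi
    rw [hN]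
    unfold zer
    congr 1
    apply Finset.filter_congr
    intro i hi
    rw [Finset.mem_Icc] at hi
    rw [hS, Finset.sum_congr rfl (fun j hj => hξ j (by
      rw [Finset.mem_range] at hj ⊢; omega)), zero_add]
  -- probability of a cylinder
  have hPC : ∀ ε : Fin n → Bool, P (C ε) = (2⁻¹ : ENNReal) ^ n := by
    intro ε
    have hprod := hindep.meas_biInter (S := Finset.range n)
      (s := fun i => ξ i ⁻¹' {steps n ε i})
      (fun i _ => ⟨{steps n ε i}, measurableSet_singleton _, rfl⟩)
    rw [hCdef]
    rw [hprod]
    have hfac : ∀ i ∈ Finset.range n, P (ξ i ⁻¹' {steps n ε i}) = 2⁻¹ := by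
      intro i hi
      rw [Finset.mem_range] at hi
      have hz : steps n ε i = 1 ∨ steps n ε i = -1 := by
        unfold steps
        rw [dif_pos hi]
        rcases ε ⟨i, hi⟩ <;> simp
      rw [← Measure.map_apply (hmeas i) (measurableSet_singleton _), hdist i]
      rcases hz with h | h <;> rw [h] <;>
        simp [Measure.dirac_apply, Set.indicator] <;> norm_num
    rw [Finset.prod_congr rfl hfac, Finset.prod_const, Finset.card_range]
  -- the junk event is null
  have hR0 : P R = 0 := by
    apply measure_iUnion_null
    intro i
    have hset : {ω | ξ i.1 ω ≠ 1 ∧ ξ i.1 ω ≠ -1} = ξ i.1 ⁻¹' (({1} ∪ {-1} : Set ℤ)ᶜ) := by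
      ext ω; simp [and_comm]
    rw [hset, ← Measure.map_apply (hmeas i.1)
      (((measurableSet_singleton (1:ℤ)).union (measurableSet_singleton (-1:ℤ))).compl),
      hdist i.1]
    simp [Measure.dirac_apply, Set.indicator]
  -- covering
  have hcover : A ⊆ (⋃ ε : Fin n → Bool, (A ∩ C ε)) ∪ R := by
    intro ω hω
    by_cases hgood : ∀ i : Fin n, ξ i.1 ω = 1 ∨ ξ i.1 ω = -1
    · left
      refine Set.mem_iUnion.mpr ⟨fun i => decide (ξ i.1 ω = 1), hω, ?_⟩
      apply Set.mem_iInter₂.mpr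
      intro i hi
      rw [Finset.mem_range] at hi
      unfold steps
      rw [dif_pos hi]
      simp only [Set.mem_preimage, Set.mem_singleton_iff]
      rcases hgood ⟨i, hi⟩ with h | h <;> simp [h]
    · right
      push_neg at hgood
      obtain ⟨i, h1, h2⟩ := hgood
      exact Set.mem_iUnion.mpr ⟨i, h1, h2⟩
  -- key bound in ENNReal
  have hkey : P A ≤ ((Finset.univ.filter Q).card : ENNReal) * (2⁻¹ : ENNReal) ^ n := by
    calc P A ≤ P ((⋃ ε : Fin n → Bool, (A ∩ C ε)) ∪ R) := measure_mono hcover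
      _ ≤ P (⋃ ε : Fin n → Bool, (A ∩ C ε)) + P R := measure_union_le _ _
      _ = P (⋃ ε : Fin n → Bool, (A ∩ C ε)) := by rw [hR0, add_zero]
      _ ≤ ∑' ε : Fin n → Bool, P (A ∩ C ε) := measure_iUnion_le _
      _ = ∑ ε : Fin n → Bool, P (A ∩ C ε) := tsum_fintype _
      _ ≤ ∑ ε : Fin n → Bool, (if Q ε then (2⁻¹ : ENNReal) ^ n else 0) := by
          apply Finset.sum_le_sum
          intro ε _
          by_cases hq : Q ε
          · rw [if_pos hq, ← hPC ε]
            exact measure_mono Set.inter_subset_right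
          · rw [if_neg hq]
            have hempty : A ∩ C ε ⊆ (∅ : Set Ω) := by
              intro ω hmem
              obtain ⟨hωA, hωC⟩ := hmem
              exact absurd (show Q ε by
                simp only [hQdef]
                rw [← hNC ε ω hωC]
                exact hωA) hq
            simp [measure_mono_null hempty measure_empty]
      _ = ((Finset.univ.filter Q).card : ENNReal) * (2⁻¹ : ENNReal) ^ n := by
          rw [← Finset.sum_filter, Finset.sum_const, nsmul_eq_mul]
  -- convert to real numbers
  have hfin : ((Finset.univ.filter Q).card : ENNReal) * (2⁻¹ : ENNReal) ^ n ≠ ⊤ :=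
    ENNReal.mul_ne_top (ENNReal.natCast_ne_top _) (ENNReal.pow_ne_top (by simp))
  have htoReal : (P A).toReal ≤ ((Finset.univ.filter Q).card : ℝ) * (2⁻¹ : ℝ) ^ n := by
    have h := ENNReal.toReal_mono hfin hkey
    rwa [ENNReal.toReal_mul, ENNReal.toReal_pow, ENNReal.toReal_inv, ENNReal.toReal_ofNat, ENNReal.toReal_natCast] at h
  have hbf : bf f ρ 0 k = f ^ k := by
    rw [bf_of_ne 0 k (by omega), gf_zero, ← pow_succ]
    congr 1
    omega
  have hcard : ((Finset.univ.filter Q).card : ℝ) ≤ 2^n * t^n * f^k := by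
    have hmb := main_bound hf ht hρdef hid n 0 k
    rw [hbf] at hmb
    calc ((Finset.univ.filter Q).card : ℝ)
        = ∑ ε : Fin n → Bool, (if Q ε then (1:ℝ) else 0) := (Finset.sum_boole Q Finset.univ).symm
      _ = ∑ ε : Fin n → Bool, (if k ≤ zer 0 (steps n ε) n then (1:ℝ) else 0) := by
          simp only [hQdef]
      _ ≤ 2^n * t^n * f^k := hmb
  calc (P A).toReal ≤ ((Finset.univ.filter Q).card : ℝ) * (2⁻¹ : ℝ) ^ n := htoReal
    _ ≤ (2^n * t^n * f^k) * (2⁻¹ : ℝ) ^ n := by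
        apply mul_le_mul_of_nonneg_right hcard (by positivity)
    _ = t^n * f^k := by
        rw [show (2:ℝ)^n * t^n * f^k * (2⁻¹:ℝ)^n
            = ((2:ℝ)^n * (2⁻¹:ℝ)^n) * (t^n * f^k) from by ring,
          show (2:ℝ)^n * (2⁻¹:ℝ)^n = 1 from by rw [← mul_pow]; norm_num, one_mul]
    _ = Real.exp (lam * n) * f ^ k := by
        rw [show lam * (n:ℝ) = (n:ℝ) * lam from by ring, Real.exp_nat_mul, htdef]
end
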